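/- arXiv:2408.10241 — 2 statements merged into one kernel-verified Lean document; each statement's English description precedes it below -/
import Mathlib

section
/- Let Θ > 1 and D, τ > 0, and let x > 0 satisfy e^x = 1 + Θ·x. Define W = D·ln 2/(x·τ) and ν = −x − 1/Θ. Then W > 0, 2^(D/(W·τ)) = 1 + Θ·D·ln 2/(W·τ), ν·e^ν = −e^(−1/Θ)/Θ, and W = −D·ln 2/(τ·(ν + 1/Θ)). -/
open Real

theorem stmt_7 (Θ D τ x : ℝ) (hΘ : 1 < Θ) (hD : 0 < D) (hτ : 0 < τ)
    (hx : 0 < x) (hxe : Real.exp x = 1 + Θ * x)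
    (W ν : ℝ) (hW : W = D * Real.log 2 / (x * τ)) (hν : ν = -x - 1 / Θ) :
    0 < W ∧
    (2 : ℝ) ^ (D / (W * τ)) = 1 + Θ * D * Real.log 2 / (W * τ) ∧
    ν * Real.exp ν = -Real.exp (-1 / Θ) / Θ ∧
    W = -D * Real.log 2 / (τ * (ν + 1 / Θ)) := by
  have hln : 0 < Real.log 2 := Real.log_pos (by norm_num)
  have hΘ0 : (0:ℝ) < Θ := lt_trans one_pos hΘ
  have hWpos : 0 < W := by
    rw [hW]; exact div_pos (mul_pos hD hln) (mul_pos hx hτ)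
  have hWτ : W * τ = D * Real.log 2 / x := by
    rw [hW]; field_simp
  have h1 : D / (W * τ) = x / Real.log 2 := by
    rw [hWτ]; field_simp
  have h2 : Θ * D * Real.log 2 / (W * τ) = Θ * x := by
    rw [hWτ]; field_simp
  refine ⟨hWpos, ?_, ?_, ?_⟩
  · rw [h1, h2, Real.rpow_def_of_pos (by norm_num : (0:ℝ) < 2),
      mul_comm, div_mul_cancel₀ _ (ne_of_gt hln), hxe]
  · have : Real.exp ν = Real.exp (-x) * Real.exp (-1/Θ) := by
      rw [hν, ← Real.exp_add]; ring_nf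
    rw [this, hν]
    have hex : Real.exp (-x) = (1 + Θ * x)⁻¹ := by
      rw [Real.exp_neg, hxe]
    rw [hex]
    have hpos : (0:ℝ) < 1 + Θ * x := by positivity
    field_simp
    ring
  · rw [hν, hW]
    have : -x - 1/Θ + 1/Θ = -x := by ring
    rw [this]
    field_simp
end

section
/- Let Ψ be a real symmetric positive definite K×K matrix, let C₁ (D₁×D₁) and C₂ (D₂×D₂) be real symmetric positive definite matrices, and let H₁ (D₁×K) and H₂ (D₂×K) be real matrices. Let H be the (D₁+D₂)×K matrix obtained by stacking H₁ on top of H₂, and C the block-diagonal matrix diag(C₁, C₂). Then the posterior covariance with both observation blocks is dominated by the posterior covariance with the first block alone: (Ψ − Ψ·H₁ᵀ·(C₁ + H₁·Ψ·H₁ᵀ)⁻¹·H₁·Ψ) − (Ψ − Ψ·Hᵀ·(C + H·Ψ·Hᵀ)⁻¹·H·Ψ) is positive semidefinite. -/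
open Matrix

section aux

variable {n m : Type*} [Fintype n] [Fintype m] [DecidableEq n] [DecidableEq m]

lemma aux_posDef_fromBlocks {A : Matrix n n ℝ} {B : Matrix m m ℝ}
    (hA : A.PosDef) (hB : B.PosDef) : (Matrix.fromBlocks A 0 0 B).PosDef := by
  refine Matrix.PosDef.of_dotProduct_mulVec_pos (Matrix.IsHermitian.fromBlocks hA.1 (by simp) hB.1) fun x hx => ?_
  have hx' : x = Sum.elim (x ∘ Sum.inl) (x ∘ Sum.inr) := by ext (i | i) <;> rfl
  rw [hx', Matrix.fromBlocks_mulVec]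
  simp only [Matrix.zero_mulVec, add_zero, zero_add, Sum.elim_comp_inl, Sum.elim_comp_inr]
  rw [star_trivial, sumElim_dotProduct_sumElim]
  by_cases h1 : (x ∘ Sum.inl) = 0
  · have h2 : (x ∘ Sum.inr) ≠ 0 := fun h2 => hx (by
      ext (i | i)
      · exact congrFun h1 i
      · exact congrFun h2 i)
    have hb := hB.dotProduct_mulVec_pos h2
    rw [star_trivial] at hb
    have h0 : (x ∘ Sum.inl) ⬝ᵥ A *ᵥ (x ∘ Sum.inl) = 0 := by rw [h1]; simp
    linarith
  · have ha := hA.dotProduct_mulVec_pos h1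
    rw [star_trivial] at ha
    have h0 : 0 ≤ (x ∘ Sum.inr) ⬝ᵥ B *ᵥ (x ∘ Sum.inr) := by
      have := hB.posSemidef.dotProduct_mulVec_nonneg (x ∘ Sum.inr)
      rwa [star_trivial] at this
    linarith

lemma aux_psd_conj {A : Matrix m m ℝ} (hA : A.PosSemidef) (B : Matrix m n ℝ) :
    (Bᵀ * A * B).PosSemidef := by
  have := hA.conjTranspose_mul_mul_same B
  rwa [conjTranspose_eq_transpose_of_trivial] at this

lemma aux_psd_conj' {A : Matrix n n ℝ} (hA : A.PosSemidef) (B : Matrix m n ℝ) :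
    (B * A * Bᵀ).PosSemidef := by
  have := hA.mul_mul_conjTranspose_same B
  rwa [conjTranspose_eq_transpose_of_trivial] at this

lemma aux_woodbury (Ψ : Matrix n n ℝ) (hΨ : Ψ.PosDef)
    (Cm : Matrix m m ℝ) (hCm : Cm.PosDef) (Hm : Matrix m n ℝ) :
    Ψ - Ψ * Hmᵀ * (Cm + Hm * Ψ * Hmᵀ)⁻¹ * Hm * Ψ = (Ψ⁻¹ + Hmᵀ * Cm⁻¹ * Hm)⁻¹ := by
  set G := Cm + Hm * Ψ * Hmᵀ with hGdef
  have hG : G.PosDef := hCm.add_posSemidef (aux_psd_conj' hΨ.posSemidef Hm)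
  have h1 : Ψ⁻¹ * Ψ = 1 :=
    Matrix.nonsing_inv_mul _ ((Matrix.isUnit_iff_isUnit_det _).1 hΨ.isUnit)
  have h2 : Cm⁻¹ * Cm = 1 :=
    Matrix.nonsing_inv_mul _ ((Matrix.isUnit_iff_isUnit_det _).1 hCm.isUnit)
  have h3 : G * G⁻¹ = 1 :=
    Matrix.mul_nonsing_inv _ ((Matrix.isUnit_iff_isUnit_det _).1 hG.isUnit)
  have h4 : Hm * Ψ * Hmᵀ = G - Cm := by rw [hGdef]; abel
  have key : (Ψ⁻¹ + Hmᵀ * Cm⁻¹ * Hm) * (Ψ - Ψ * Hmᵀ * G⁻¹ * Hm * Ψ) = 1 := by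
    calc (Ψ⁻¹ + Hmᵀ * Cm⁻¹ * Hm) * (Ψ - Ψ * Hmᵀ * G⁻¹ * Hm * Ψ)
        = Ψ⁻¹ * Ψ + Hmᵀ * (Cm⁻¹ * (Hm * Ψ))
          - Ψ⁻¹ * Ψ * (Hmᵀ * (G⁻¹ * (Hm * Ψ)))
          - Hmᵀ * (Cm⁻¹ * (Hm * Ψ * Hmᵀ * (G⁻¹ * (Hm * Ψ)))) := by
            simp only [Matrix.mul_sub, Matrix.sub_mul, Matrix.add_mul, Matrix.mul_add,
              Matrix.mul_assoc]
            abel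
      _ = 1 := by
          rw [h4, h1, Matrix.sub_mul, ← Matrix.mul_assoc G G⁻¹, h3,
            Matrix.mul_sub Cm⁻¹, ← Matrix.mul_assoc Cm⁻¹ Cm, h2, Matrix.mul_sub Hmᵀ]
          simp only [Matrix.one_mul, one_mul]
          abel
  exact (Matrix.inv_eq_right_inv key).symm

open scoped MatrixOrder in
lemma aux_sqrt {A : Matrix n n ℝ} (hA : A.PosSemidef) :
    ∃ Q : Matrix n n ℝ, Q.PosSemidef ∧ Q * Q = A :=
  ⟨CFC.sqrt A, Matrix.nonneg_iff_posSemidef.mp (CFC.sqrt_nonneg A),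
    CFC.sqrt_mul_sqrt_self A (Matrix.nonneg_iff_posSemidef.mpr hA)⟩

end aux

theorem stmt_14 (K D₁ D₂ : ℕ)
    (Ψ : Matrix (Fin K) (Fin K) ℝ) (hΨ : Ψ.PosDef)
    (C₁ : Matrix (Fin D₁) (Fin D₁) ℝ) (hC₁ : C₁.PosDef)
    (C₂ : Matrix (Fin D₂) (Fin D₂) ℝ) (hC₂ : C₂.PosDef)
    (H₁ : Matrix (Fin D₁) (Fin K) ℝ) (H₂ : Matrix (Fin D₂) (Fin K) ℝ)
    (H : Matrix (Fin D₁ ⊕ Fin D₂) (Fin K) ℝ) (hH : H = Matrix.fromRows H₁ H₂)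
    (C : Matrix (Fin D₁ ⊕ Fin D₂) (Fin D₁ ⊕ Fin D₂) ℝ)
    (hC : C = Matrix.fromBlocks C₁ 0 0 C₂) :
    ((Ψ - Ψ * H₁ᵀ * (C₁ + H₁ * Ψ * H₁ᵀ)⁻¹ * H₁ * Ψ) -
      (Ψ - Ψ * Hᵀ * (C + H * Ψ * Hᵀ)⁻¹ * H * Ψ)).PosSemidef := by
  subst hH hC
  set S₁ := H₁ᵀ * C₁⁻¹ * H₁ with hS₁def
  set T := H₂ᵀ * C₂⁻¹ * H₂ with hTdef
  have hS₁ : S₁.PosSemidef := aux_psd_conj hC₁.inv.posSemidef H₁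
  have hT : T.PosSemidef := aux_psd_conj hC₂.inv.posSemidef H₂
  have hA₁ : (Ψ⁻¹ + S₁).PosDef := hΨ.inv.add_posSemidef hS₁
  have hCpd : (fromBlocks C₁ 0 0 C₂).PosDef := aux_posDef_fromBlocks hC₁ hC₂
  have w1 : Ψ - Ψ * H₁ᵀ * (C₁ + H₁ * Ψ * H₁ᵀ)⁻¹ * H₁ * Ψ = (Ψ⁻¹ + S₁)⁻¹ :=
    aux_woodbury Ψ hΨ C₁ hC₁ H₁
  have w2 : Ψ - Ψ * (fromRows H₁ H₂)ᵀ *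
        (fromBlocks C₁ 0 0 C₂ + fromRows H₁ H₂ * Ψ * (fromRows H₁ H₂)ᵀ)⁻¹ *
        fromRows H₁ H₂ * Ψ
      = (Ψ⁻¹ + (fromRows H₁ H₂)ᵀ * (fromBlocks C₁ 0 0 C₂)⁻¹ * fromRows H₁ H₂)⁻¹ :=
    aux_woodbury Ψ hΨ _ hCpd _
  have hCinv : (fromBlocks C₁ 0 0 C₂)⁻¹ = fromBlocks C₁⁻¹ 0 0 C₂⁻¹ := by
    apply Matrix.inv_eq_right_inv
    rw [Matrix.fromBlocks_multiply]
    simp [Matrix.mul_nonsing_inv _ ((Matrix.isUnit_iff_isUnit_det _).1 hC₁.isUnit),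
      Matrix.mul_nonsing_inv _ ((Matrix.isUnit_iff_isUnit_det _).1 hC₂.isUnit),
      ← Matrix.fromBlocks_one]
  have hsum : (fromRows H₁ H₂)ᵀ * (fromBlocks C₁ 0 0 C₂)⁻¹ * fromRows H₁ H₂ = S₁ + T := by
    rw [hCinv, Matrix.transpose_fromRows, Matrix.fromCols_mul_fromBlocks,
      Matrix.fromCols_mul_fromRows]
    simp [hS₁def, hTdef, Matrix.mul_assoc]
  rw [w1, w2, hsum]
  -- now reduce to second Woodbury application
  set P₁ := (Ψ⁻¹ + S₁)⁻¹ with hP₁def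
  have hP₁ : P₁.PosDef := hA₁.inv
  have hP₁sym : P₁ᵀ = P₁ := by
    have := hP₁.isHermitian
    rwa [IsHermitian, conjTranspose_eq_transpose_of_trivial] at this
  obtain ⟨Q, hQ, hQQ⟩ := aux_sqrt hC₂.inv.posSemidef
  have hQsym : Qᵀ = Q := by
    have := hQ.isHermitian
    rwa [IsHermitian, conjTranspose_eq_transpose_of_trivial] at this
  set R := Q * H₂ with hRdef
  have hRT : Rᵀ * R = T := by
    rw [hRdef, Matrix.transpose_mul, hQsym, hTdef, ← hQQ]
    simp only [Matrix.mul_assoc]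
  have w3 : P₁ - P₁ * Rᵀ * ((1 : Matrix (Fin D₂) (Fin D₂) ℝ) + R * P₁ * Rᵀ)⁻¹ * R * P₁
      = (P₁⁻¹ + Rᵀ * (1 : Matrix (Fin D₂) (Fin D₂) ℝ)⁻¹ * R)⁻¹ :=
    aux_woodbury P₁ hP₁ 1 Matrix.PosDef.one R
  have hP₁inv : P₁⁻¹ = Ψ⁻¹ + S₁ :=
    Matrix.nonsing_inv_nonsing_inv _ ((Matrix.isUnit_iff_isUnit_det _).1 hA₁.isUnit)
  rw [hP₁inv, inv_one, Matrix.mul_one, hRT, add_assoc] at w3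
  have heq : P₁ - (Ψ⁻¹ + (S₁ + T))⁻¹
      = P₁ * Rᵀ * ((1 : Matrix (Fin D₂) (Fin D₂) ℝ) + R * P₁ * Rᵀ)⁻¹ * R * P₁ := by
    rw [← w3]; abel
  rw [heq]
  have hN : ((1 : Matrix (Fin D₂) (Fin D₂) ℝ) + R * P₁ * Rᵀ).PosDef :=
    Matrix.PosDef.one.add_posSemidef (aux_psd_conj' hP₁.posSemidef R)
  have := aux_psd_conj hN.inv.posSemidef (R * P₁)
  rw [Matrix.transpose_mul, hP₁sym] at this
  convert this using 1
  simp only [Matrix.mul_assoc]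
end
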